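/- Let z ∈ ℂ and let {a_n}, {z_n} be an infinite continued fraction expansion and iteration sequence of z over the Eisenstein integers 𝔈 with respect to a nearest integer algorithm, with Q-pair {p_n}, {q_n}. Suppose M > 0 is such that |a_n| ≤ M for all n ≥ 0. Then for all p, q ∈ 𝔈 with q ≠ 0, |z − p/q| ≥ (1/(2(M + 2)²))·|q|⁻². -/

import Mathlib

open Complex

/-- The primitive cube root of unity ω = (−1 + √3·i)/2. -/
noncomputable def eisOmega : ℂ := (-1 + Real.sqrt 3 * Complex.I) / 2

/-- `a : ℂ` is an Eisenstein integer: `a = x + y·ω` with `x, y ∈ ℤ`. -/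
def IsEis (a : ℂ) : Prop := ∃ x y : ℤ, a = (x : ℂ) + (y : ℂ) * eisOmega


lemma sqrt3_sq : (Real.sqrt 3 : ℝ)^2 = 3 := Real.sq_sqrt (by norm_num)

lemma sqrt3_pos : (0:ℝ) < Real.sqrt 3 := Real.sqrt_pos.mpr (by norm_num)

lemma sqrt3_sq' : ((Real.sqrt 3 : ℝ) : ℂ)^2 = 3 := by
  rw [← Complex.ofReal_pow, sqrt3_sq]; norm_num

lemma eisOmega_sq : eisOmega^2 = -1 - eisOmega := by
  unfold eisOmega
  linear_combination (Complex.I^2/4) * sqrt3_sq' + (3/4 : ℂ) * Complex.I_sq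

lemma eis_abs_sq (x y : ℝ) : ‖(x:ℂ) + y * eisOmega‖^2 = x^2 - x*y + y^2 := by
  rw [Complex.sq_norm, Complex.normSq_apply]
  simp [eisOmega, Complex.add_re, Complex.add_im, Complex.mul_re, Complex.mul_im,
    Complex.div_re, Complex.div_im]
  nlinarith [sqrt3_sq]

lemma IsEis.add {a b : ℂ} (h1 : IsEis a) (h2 : IsEis b) : IsEis (a + b) := by
  obtain ⟨x1, y1, rfl⟩ := h1; obtain ⟨x2, y2, rfl⟩ := h2
  exact ⟨x1 + x2, y1 + y2, by push_cast; ring⟩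

lemma IsEis.mul {a b : ℂ} (h1 : IsEis a) (h2 : IsEis b) : IsEis (a * b) := by
  obtain ⟨x1, y1, rfl⟩ := h1; obtain ⟨x2, y2, rfl⟩ := h2
  refine ⟨x1 * x2 - y1 * y2, x1 * y2 + y1 * x2 - y1 * y2, ?_⟩
  push_cast
  linear_combination ((y1 : ℂ) * y2) * eisOmega_sq

lemma IsEis.neg {a : ℂ} (h1 : IsEis a) : IsEis (-a) := by
  obtain ⟨x1, y1, rfl⟩ := h1
  exact ⟨-x1, -y1, by push_cast; ring⟩

lemma IsEis.one : IsEis (1 : ℂ) := ⟨1, 0, by push_cast; ring⟩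

lemma IsEis.zero : IsEis (0 : ℂ) := ⟨0, 0, by push_cast; ring⟩

lemma IsEis.negOnePow (n : ℕ) : IsEis ((-1 : ℂ)^n) := by
  rcases neg_one_pow_eq_or ℂ n with h | h <;> rw [h]
  · exact IsEis.one
  · have := IsEis.one.neg; simpa using this

lemma IsEis.one_le_abs {a : ℂ} (h : IsEis a) (h0 : a ≠ 0) : 1 ≤ ‖a‖ := by
  obtain ⟨x, y, rfl⟩ := h
  have hsq : ‖(x:ℂ) + (y:ℂ) * eisOmega‖^2 = (x:ℝ)^2 - (x:ℝ)*(y:ℝ) + (y:ℝ)^2 := by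
    have := eis_abs_sq (x : ℝ) (y : ℝ); push_cast at this ⊢; exact this
  have hxy : ¬(x = 0 ∧ y = 0) := by rintro ⟨rfl, rfl⟩; simp at h0
  have hint : (1 : ℤ) ≤ x^2 - x*y + y^2 := by
    rcases eq_or_ne x 0 with rfl | hx
    · have hy : y ≠ 0 := fun hy => hxy ⟨rfl, hy⟩
      nlinarith [Int.one_le_abs hy, _root_.sq_abs y]
    · nlinarith [Int.one_le_abs hx, _root_.sq_abs x, _root_.sq_abs y, sq_nonneg (2*x - y),
        sq_nonneg (x - 2*y)]
  have h1 : (1 : ℝ) ≤ (x:ℝ)^2 - (x:ℝ)*(y:ℝ) + (y:ℝ)^2 := by exact_mod_cast hint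
  nlinarith [norm_nonneg ((x:ℂ) + (y:ℂ) * eisOmega)]

lemma eis_corner (x y : ℝ) (hx0 : 0 ≤ x) (hx1 : x ≤ 1) (hy0 : 0 ≤ y) (hy1 : y ≤ 1) :
    ∃ c1 c2 : ℤ, (x - c1)^2 + (x - c1)*(y - c2) + (y - c2)^2 ≤ 1/3 := by
  rcases le_total y x with hyx | hxy
  · rcases le_total (2*x + y) 1 with h1 | h1
    · exact ⟨0, 0, by push_cast; nlinarith⟩
    · rcases le_total (x + 2*y) 2 with h2 | h2
      · exact ⟨1, 0, by push_cast; nlinarith⟩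
      · exact ⟨1, 1, by push_cast; nlinarith⟩
  · rcases le_total (x + 2*y) 1 with h1 | h1
    · exact ⟨0, 0, by push_cast; nlinarith⟩
    · rcases le_total (2*x + y) 2 with h2 | h2
      · exact ⟨0, 1, by push_cast; nlinarith⟩
      · exact ⟨1, 1, by push_cast; nlinarith⟩

lemma eis_corner_all (x y : ℝ) :
    ∃ m n : ℤ, (x - m)^2 + (x - m)*(y - n) + (y - n)^2 ≤ 1/3 := by
  obtain ⟨c1, c2, h⟩ := eis_corner (Int.fract x) (Int.fract y) (Int.fract_nonneg x)
    (le_of_lt (Int.fract_lt_one x)) (Int.fract_nonneg y) (le_of_lt (Int.fract_lt_one y))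
  refine ⟨⌊x⌋ + c1, ⌊y⌋ + c2, ?_⟩
  have hx : x - (⌊x⌋ + c1 : ℤ) = Int.fract x - c1 := by
    rw [Int.fract]; push_cast; ring
  have hy : y - (⌊y⌋ + c2 : ℤ) = Int.fract y - c2 := by
    rw [Int.fract]; push_cast; ring
  rw [hx, hy]; exact h

lemma eis_cover (w : ℂ) : ∃ b : ℂ, IsEis b ∧ ‖w - b‖^2 ≤ 1/3 := by
  set s := Real.sqrt 3 with hsdef
  obtain ⟨m, n, h⟩ := eis_corner_all (w.re - w.im / s) (2 * w.im / s)
  refine ⟨((m + n : ℤ) : ℂ) + (n : ℂ) * eisOmega, ⟨m + n, n, rfl⟩, ?_⟩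
  set u := w.re - w.im / s - m with hu
  set v := 2 * w.im / s - n with hv
  have hs0 : s ≠ 0 := ne_of_gt sqrt3_pos
  have hre : (w - (((m + n : ℤ) : ℂ) + (n : ℂ) * eisOmega)).re = u + v/2 := by
    simp [eisOmega, Complex.add_re, Complex.mul_re, Complex.div_re, Complex.sub_re, hu, hv]
    field_simp
    ring
  have him : (w - (((m + n : ℤ) : ℂ) + (n : ℂ) * eisOmega)).im = v * s / 2 := by
    simp [eisOmega, Complex.add_im, Complex.mul_im, Complex.sub_im, hu, hv]
    field_simp
    nlinarith [sqrt3_sq]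
  rw [Complex.sq_norm, Complex.normSq_apply, hre, him]
  nlinarith [sqrt3_sq, h]

set_option maxHeartbeats 2000000 in

/-- If |aₙ| ≤ M for all n, then for all Eisenstein integers p, q with q ≠ 0,
|z − p/q| ≥ (1/(2·(M + 2)²))·|q|⁻². -/
theorem eisenstein_cf_badly_approximable_of_bounded
    (z : ℂ) (a zs : ℕ → ℂ)
    (ha : ∀ n, IsEis (a n))
    (hz0 : zs 0 = z)
    (hnear : ∀ n, ∀ b : ℂ, IsEis b → ‖zs n - a n‖ ≤ ‖zs n - b‖)
    (hne : ∀ n, zs n ≠ a n)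
    (hit : ∀ n, zs (n + 1) = (zs n - a n)⁻¹)
    (p q : ℕ → ℂ)
    (hp0 : p 0 = 1) (hp1 : p 1 = a 0)
    (hprec : ∀ n, p (n + 2) = a (n + 1) * p (n + 1) + p n)
    (hq0 : q 0 = 0) (hq1 : q 1 = 1)
    (hqrec : ∀ n, q (n + 2) = a (n + 1) * q (n + 1) + q n)
    (hqne : ∀ n, q (n + 1) ≠ 0)
    (M : ℝ) (hM : 0 < M) (haM : ∀ n, ‖a n‖ ≤ M)
    :
    ∀ pp qq : ℂ, IsEis pp → IsEis qq → qq ≠ 0 →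
      (1 / (2 * (M + 2) ^ 2)) * ‖qq‖ ^ (-2 : ℤ) ≤
        ‖z - pp / qq‖ := by
  intro pp qq hpp hqq hqq0
  set s : ℝ := Real.sqrt 3 with hsdef
  have hs2 : s^2 = 3 := sqrt3_sq
  have hs_pos : 0 < s := sqrt3_pos
  have hs_gt1 : 1 < s := by nlinarith
  have hs_lt2 : s < 2 := by nlinarith
  -- step sizes
  have hw_ne : ∀ n, zs n - a n ≠ 0 := fun n => sub_ne_zero.mpr (hne n)
  have hw_pos : ∀ n, 0 < ‖zs n - a n‖ :=
    fun n => norm_pos_iff.mpr (hw_ne n)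
  have hw : ∀ n, ‖zs n - a n‖ ≤ 1/s := by
    intro n
    obtain ⟨b, hb, hb2⟩ := eis_cover (zs n)
    refine le_trans (hnear n b hb) ?_
    rw [le_div_iff₀ hs_pos]
    nlinarith [norm_nonneg (zs n - b), sq_nonneg (‖zs n - b‖ * s - 1),
      sq_nonneg (‖zs n - b‖ * s + 1)]
  -- e sequence
  set e : ℕ → ℂ := fun n => p n - z * q n with he
  have he0 : e 0 = 1 := by simp [he, hp0, hq0]
  have herec : ∀ n, e (n+1) = -(zs n - a n) * e n := by
    intro n
    induction n with
    | zero => simp only [he, hp0, hp1, hq0, hq1, hz0]; ring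
    | succ k ih =>
      have h1 : e (k+2) = a (k+1) * e (k+1) + e k := by
        simp only [he, hprec k, hqrec k]; ring
      rw [h1, ih, hit k]
      have hk : zs k - a k ≠ 0 := hw_ne k
      field_simp
      ring
  -- E sequence
  set E : ℕ → ℝ := fun n => ‖e n‖ with hE
  have hE0 : E 0 = 1 := by simp [hE, he0]
  have hE_nonneg : ∀ n, 0 ≤ E n := fun n => norm_nonneg _
  have hErec : ∀ n, E (n+1) = ‖zs n - a n‖ * E n := by
    intro n
    simp only [hE]
    rw [herec n, norm_mul, norm_neg]
  have hEdec : ∀ n, E (n+1) ≤ (1/s) * E n := by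
    intro n; rw [hErec n]
    exact mul_le_mul_of_nonneg_right (hw n) (hE_nonneg n)
  have hEmono : ∀ n, E (n+1) ≤ E n := by
    intro n
    have h1s : 1/s ≤ 1 := by rw [div_le_one hs_pos]; linarith
    calc E (n+1) ≤ (1/s) * E n := hEdec n
      _ ≤ 1 * E n := mul_le_mul_of_nonneg_right h1s (hE_nonneg n)
      _ = E n := one_mul _
  have hElow : ∀ n, E n ≤ (M+1) * E (n+1) := by
    intro n
    have hz1 : ‖zs (n+1)‖ ≤ M + 1 := by
      have : zs (n+1) = (zs (n+1) - a (n+1)) + a (n+1) := by ring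
      rw [this]
      refine le_trans (norm_add_le _ _) ?_
      have := hw (n+1); have := haM (n+1)
      have h1s : 1/s ≤ 1 := by
        rw [div_le_one hs_pos]; linarith
      linarith
    have habs : ‖zs (n+1)‖ * ‖zs n - a n‖ = 1 := by
      rw [hit n, norm_inv]
      exact inv_mul_cancel₀ (ne_of_gt (hw_pos n))
    have : E n = ‖zs (n+1)‖ * E (n+1) := by
      rw [hErec n, ← mul_assoc, habs, one_mul]
    rw [this]
    exact mul_le_mul_of_nonneg_right hz1 (hE_nonneg (n+1))
  have hgeo : ∀ n, E n ≤ (1/s)^n := by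
    intro n
    induction n with
    | zero => simp [hE0]
    | succ k ih =>
      refine le_trans (hEdec k) ?_
      rw [pow_succ, mul_comm ((1/s)^k)]
      exact mul_le_mul_of_nonneg_left ih (by positivity)
  -- determinant
  have hdet : ∀ n, p (n+1) * q n - p n * q (n+1) = (-1:ℂ)^(n+1) := by
    intro n
    induction n with
    | zero => simp [hp0, hp1, hq0, hq1]
    | succ k ih =>
      rw [hprec k, hqrec k, pow_succ]
      linear_combination (-1:ℂ) * ih
  have hq_id : ∀ n, q (n+1) * e n - q n * e (n+1) = (-1:ℂ)^n := by
    intro n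
    have hd := hdet n
    rw [pow_succ] at hd
    simp only [he]
    linear_combination (-1:ℂ) * hd
  -- |q n| * E n ≤ s/2
  have hqE : ∀ n, ‖q n‖ * E n ≤ s/2 := by
    intro n
    induction n with
    | zero => simp [hq0]; positivity
    | succ k ih =>
      have h1 : q (k+1) * e k = (-1:ℂ)^k + q k * e (k+1) := by
        linear_combination hq_id k
      have h2 : ‖q (k+1)‖ * E k ≤ 1 + ‖q k‖ * E (k+1) := by
        calc ‖q (k+1)‖ * E k = ‖q (k+1) * e k‖ := (norm_mul _ _).symm
          _ ≤ ‖(-1:ℂ)^k‖ + ‖q k * e (k+1)‖ := by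
              rw [h1]; exact norm_add_le _ _
          _ = 1 + ‖q k‖ * E (k+1) := by simp [norm_mul, hE]
      have h3 : ‖q k‖ * E (k+1) ≤ (1/s) * (‖q k‖ * E k) := by
        have := mul_le_mul_of_nonneg_left (hEdec k) (norm_nonneg (q k))
        calc ‖q k‖ * E (k+1) ≤ ‖q k‖ * ((1/s) * E k) := this
          _ = (1/s) * (‖q k‖ * E k) := by ring
      have h4 : ‖q (k+1)‖ * E k ≤ 3/2 := by
        have : (1/s) * (‖q k‖ * E k) ≤ (1/s) * (s/2) :=
          mul_le_mul_of_nonneg_left ih (by positivity)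
        have h5 : (1/s) * (s/2) = 1/2 := by field_simp
        linarith
      have h6 : ‖q (k+1)‖ * E (k+1) ≤ (1/s) * (‖q (k+1)‖ * E k) := by
        have := mul_le_mul_of_nonneg_left (hEdec k) (norm_nonneg (q (k+1)))
        calc ‖q (k+1)‖ * E (k+1) ≤ ‖q (k+1)‖ * ((1/s) * E k) := this
          _ = (1/s) * (‖q (k+1)‖ * E k) := by ring
      have h7 : (1/s) * (3/2) = s/2 := by
        field_simp; nlinarith
      have h8 : (1/s) * (‖q (k+1)‖ * E k) ≤ (1/s) * (3/2) :=
        mul_le_mul_of_nonneg_left h4 (by positivity)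
      linarith
  -- setup for main argument
  have hq_abs1 : 1 ≤ ‖qq‖ := hqq.one_le_abs hqq0
  have hq_abs_pos : 0 < ‖qq‖ := lt_of_lt_of_le one_pos hq_abs1
  set B : ℝ := 1/(2 * ‖qq‖) with hB
  have hB_pos : 0 < B := by positivity
  have hB_lt1 : B < 1 := by
    rw [hB, div_lt_one (by positivity)]
    linarith
  have hex : ∃ n, E n < B := by
    obtain ⟨n, hn⟩ := exists_pow_lt_of_lt_one hB_pos
      (show 1/s < 1 by rw [div_lt_one hs_pos]; linarith)
    exact ⟨n, lt_of_le_of_lt (hgeo n) hn⟩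
  obtain ⟨n, hn_spec, hmin⟩ : ∃ n, E n < B ∧ ∀ k, k < n → ¬ E k < B :=
    ⟨Nat.find hex, Nat.find_spec hex, fun k hk => Nat.find_min hex hk⟩
  have hn_pos : n ≠ 0 := by
    intro h0
    rw [h0, hE0] at hn_spec
    linarith
  obtain ⟨m, hm⟩ := Nat.exists_eq_succ_of_ne_zero hn_pos
  have hEm : B ≤ E m := by
    have := hmin m (show m < n by omega)
    linarith [not_lt.mp this]
  have hEm1 : E (m+1) < B := by
    have : (m+1) = n := hm.symm
    rw [this]; exact hn_spec
  have hEm1_low : B/(M+1) ≤ E (m+1) := by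
    have h1 := hElow m
    rw [div_le_iff₀ (by linarith)]
    nlinarith
  -- decomposition
  set ε : ℂ := (-1:ℂ)^(m+1) with hε
  have hε2 : ε^2 = 1 := by
    rw [hε, ← pow_mul]
    exact (neg_one_pow_eq_one_iff_even (by norm_num : (-1:ℂ) ≠ 1)).mpr ⟨m+1, by ring⟩
  have hεabs : ‖ε‖ = 1 := by
    rw [hε, norm_pow]; simp
  have hd : p (m+1) * q m - p m * q (m+1) = ε := hdet m
  set u : ℂ := -ε * (pp * q (m+1) - qq * p (m+1)) with hu
  set v : ℂ := -ε * (qq * p m - pp * q m) with hv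
  have hpqEis : ∀ k, IsEis (p k) ∧ IsEis (q k) := by
    intro k
    have H : ∀ j, (IsEis (p j) ∧ IsEis (q j)) ∧ (IsEis (p (j+1)) ∧ IsEis (q (j+1))) := by
      intro j
      induction j with
      | zero =>
        refine ⟨⟨?_, ?_⟩, ?_, ?_⟩
        · rw [hp0]; exact IsEis.one
        · rw [hq0]; exact IsEis.zero
        · rw [hp1]; exact ha 0
        · rw [hq1]; exact IsEis.one
      | succ j ih =>
        refine ⟨ih.2, ?_, ?_⟩
        · rw [hprec j]; exact ((ha (j+1)).mul ih.2.1).add ih.1.1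
        · rw [hqrec j]; exact ((ha (j+1)).mul ih.2.2).add ih.1.2
    exact (H k).1
  have hεEis : IsEis (-ε) := (IsEis.negOnePow (m+1)).neg
  have huEis : IsEis u := by
    rw [hu]
    exact hεEis.mul ((hpp.mul (hpqEis (m+1)).2).add (hqq.mul (hpqEis (m+1)).1).neg)
  have hvEis : IsEis v := by
    rw [hv]
    exact hεEis.mul ((hqq.mul (hpqEis m).1).add (hpp.mul (hpqEis m).2).neg)
  have hA : u * q m + v * q (m+1) = qq := by
    rw [hu, hv]
    linear_combination (ε * qq) * hd + qq * hε2
  have hBB : u * p m + v * p (m+1) = pp := by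
    rw [hu, hv]
    linear_combination (ε * pp) * hd + pp * hε2
  have hlin : u * e m + v * e (m+1) = pp - z * qq := by
    simp only [he]
    linear_combination hBB - z * hA
  set L : ℝ := ‖pp - z * qq‖ with hL
  -- reduce goal
  have key : 1/(2*(M+2)^2) ≤ L * ‖qq‖ := by
    by_cases hu0 : u = 0
    · -- case u = 0
      have hv0 : v ≠ 0 := by
        intro hv0
        rw [hu0, hv0] at hA
        simp at hA
        exact hqq0 hA.symm
      have hv1 : 1 ≤ ‖v‖ := hvEis.one_le_abs hv0
      have hLval : L = ‖v‖ * E (m+1) := by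
        rw [hL, ← hlin, hu0]
        simp [norm_mul, hE]
      have h1 : E (m+1) ≤ L := by
        rw [hLval]
        nlinarith [hE_nonneg (m+1)]
      have h2 : 1/(2*(M+1)) ≤ L * ‖qq‖ := by
        have heq2 : B/(M+1) * ‖qq‖ = 1/(2*(M+1)) := by
          rw [hB]; field_simp
        have h21 : B/(M+1) * ‖qq‖ ≤ E (m+1) * ‖qq‖ :=
          mul_le_mul_of_nonneg_right hEm1_low (le_of_lt hq_abs_pos)
        have h22 : E (m+1) * ‖qq‖ ≤ L * ‖qq‖ :=
          mul_le_mul_of_nonneg_right h1 (le_of_lt hq_abs_pos)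
        linarith
      have h3 : (0:ℝ) < 2*(M+1) := by linarith
      have h4 : 2*(M+1) ≤ 2*(M+2)^2 := by nlinarith
      have h5 := one_div_le_one_div_of_le h3 h4
      linarith
    · -- case u ≠ 0
      have hu1 : 1 ≤ ‖u‖ := huEis.one_le_abs hu0
      have hv_bound : ‖v‖ ≤ ‖qq‖ * E m + ‖q m‖ * L := by
        have hveq : v = -ε * (qq * e m - q m * (pp - z * qq)) := by
          rw [hv]; simp only [he]; ring
        calc ‖v‖ = ‖qq * e m - q m * (pp - z * qq)‖ := by
              rw [hveq, norm_mul, norm_neg, hεabs, one_mul]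
          _ ≤ ‖qq * e m‖ + ‖q m * (pp - z * qq)‖ := by
              rw [sub_eq_add_neg]
              refine le_trans (norm_add_le _ _) ?_
              rw [norm_neg]
          _ = ‖qq‖ * E m + ‖q m‖ * L := by simp [norm_mul, hE, hL]
      have hL1 : E m ≤ L + ‖v‖ * E (m+1) := by
        have hueq : u * e m = (pp - z * qq) - v * e (m+1) := by
          linear_combination hlin
        have : ‖u‖ * E m ≤ L + ‖v‖ * E (m+1) := by
          calc ‖u‖ * E m = ‖u * e m‖ := (norm_mul _ _).symm
            _ = ‖(pp - z * qq) + -(v * e (m+1))‖ := by rw [hueq, sub_eq_add_neg]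
            _ ≤ ‖pp - z * qq‖ + ‖-(v * e (m+1))‖ := norm_add_le _ _
            _ = L + ‖v‖ * E (m+1) := by simp [norm_mul, hE, hL]
        nlinarith [hE_nonneg m]
      have f2 : ‖qq‖ * E (m+1) ≤ 1/2 := by
        have : ‖qq‖ * E (m+1) < ‖qq‖ * B :=
          mul_lt_mul_of_pos_left hEm1 hq_abs_pos
        have hqqB : ‖qq‖ * B = 1/2 := by rw [hB]; field_simp
        linarith
      have f3 : ‖q m‖ * E (m+1) ≤ s/2 := by
        have := mul_le_mul_of_nonneg_left (hEmono m) (norm_nonneg (q m))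
        linarith [hqE m]
      have hL_nonneg : 0 ≤ L := norm_nonneg _
      -- E m ≤ L + |v| E(m+1) ≤ L + (|qq| E m + |q m| L) E(m+1)
      have f1 : E m ≤ L + (‖qq‖ * E m + ‖q m‖ * L) * E (m+1) := by
        have := mul_le_mul_of_nonneg_right hv_bound (hE_nonneg (m+1))
        linarith
      -- (|qq| E m + |q m| L) E(m+1) = (|qq| E(m+1)) E m + (|q m| E(m+1)) L ≤ E m/2 + (s/2) L
      have f5 : (‖qq‖ * E m + ‖q m‖ * L) * E (m+1)
          ≤ (1/2) * E m + (s/2) * L := by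
        have e1 : (‖qq‖ * E m + ‖q m‖ * L) * E (m+1)
            = (‖qq‖ * E (m+1)) * E m + (‖q m‖ * E (m+1)) * L := by ring
        rw [e1]
        have := mul_le_mul_of_nonneg_right f2 (hE_nonneg m)
        have := mul_le_mul_of_nonneg_right f3 hL_nonneg
        nlinarith [hE_nonneg m, hL_nonneg]
      -- so E m / 2 ≤ (1 + s/2) L, E m ≥ B
      have f6 : (1/2) * E m ≤ (1 + s/2) * L := by linarith
      have f7 : B ≤ E m := hEm
      -- L * |qq| ≥ 1/(4 + 2s) ≥ 1/(2(M+2)^2)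
      have f8 : 1/(4 + 2*s) ≤ L * ‖qq‖ := by
        have h1 : (1/2) * B ≤ (1 + s/2) * L := by
          have : (1/2) * B ≤ (1/2) * E m := by linarith
          linarith
        have h2 : (1/2) * B * ‖qq‖ = 1/4 := by rw [hB]; field_simp; ring
        rw [div_le_iff₀ (by linarith)]
        nlinarith [mul_le_mul_of_nonneg_right h1 (le_of_lt hq_abs_pos)]
      refine le_trans ?_ f8
      rw [div_le_div_iff₀ (by nlinarith) (by linarith)]
      nlinarith
  -- finish
  have habs : ‖z - pp/qq‖ = L / ‖qq‖ := by
    have heq : z - pp/qq = -((pp - z * qq)/qq) := by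
      field_simp
      ring
    rw [heq, norm_neg, norm_div, hL]
  rw [habs]
  have hz2 : (‖qq‖)^(-2:ℤ) = ((‖qq‖)^2)⁻¹ := by
    rw [zpow_neg, zpow_two, pow_two]
  rw [hz2, le_div_iff₀ hq_abs_pos]
  have hfs : 1/(2*(M+2)^2) * ((‖qq‖)^2)⁻¹ * ‖qq‖ * ‖qq‖
      = 1/(2*(M+2)^2) := by
    field_simp
  rw [← hfs] at key
  exact (mul_le_mul_iff_of_pos_right hq_abs_pos).mp key
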